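/- If (a, b) ∈ B(q) × B(n-q) with a ≽ b^#, and R_1, R_2 are canonically ordered trees with weight sequences a and b respectively, then the ordered tree R obtained from R_2 by attaching R_1 as the new first subtree of the root of R_2 is canonically ordered, and ws(R) = n ⊕ a ⊕ b^#. -/

import Mathlib

inductive OTree : Type
  | node : List OTree → OTree

namespace OTree

def size : OTree → ℕ
  | .node cs => (cs.attach.map (fun c => size c.1)).sum + 1
decreasing_by simp only [OTree.node.sizeOf_spec]; have := List.sizeOf_lt_of_mem c.2; omega

def ws : OTree → List ℕ
  | .node cs => size (.node cs) :: (cs.attach.map (fun c => ws c.1)).flatten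
decreasing_by simp only [OTree.node.sizeOf_spec]; have := List.sizeOf_lt_of_mem c.2; omega

def preorder : OTree → List OTree
  | .node cs => .node cs :: (cs.attach.map (fun c => preorder c.1)).flatten
decreasing_by simp only [OTree.node.sizeOf_spec]; have := List.sizeOf_lt_of_mem c.2; omega

lemma size_pos (R : OTree) : 0 < R.size := by
  cases R with | node cs => simp only [OTree.size]; omega

end OTree

inductive RIso : OTree → OTree → Prop
  | node {cs cs' : List OTree} (l : List OTree) (hp : l.Perm cs')
      (hlen : cs.length = l.length)
      (h : ∀ (i : ℕ) (h1 : i < cs.length) (h2 : i < l.length), RIso cs[i] l[i]) :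
      RIso (.node cs) (.node cs')

inductive Canonical : OTree → Prop
  | node {cs : List OTree}
      (hchain : List.Chain' (fun u v => OTree.ws v ≤ OTree.ws u) cs)
      (h : ∀ c ∈ cs, Canonical c) : Canonical (.node cs)

def Centroidal {V : Type} [Fintype V] (G : SimpleGraph V) (u : V) : Prop :=
  ∀ v : ↥{x : V | x ≠ u},
    2 * Nat.card {w : ↥{x : V | x ≠ u} | (G.induce {x : V | x ≠ u}).Reachable v w}
      ≤ Fintype.card V

def IsParent (w : List ℕ) (i j : ℕ) : Prop :=
  i < j ∧ j < i + w.getD i 0 ∧ ∀ k, i < k → k < j → ¬ (j < k + w.getD k 0)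

def graphOf (R : OTree) : SimpleGraph (Fin R.size) :=
  SimpleGraph.fromRel (fun i j => IsParent R.ws i.1 j.1)

def rootIdx (R : OTree) : Fin R.size := ⟨0, R.size_pos⟩

def B (n : ℕ) : Set (List ℕ) := {s | ∃ R : OTree, Canonical R ∧ R.size = n ∧ R.ws = s}

def Succeq (s t : List ℕ) : Prop := t ≤ s ∨ s <+: t

def A (q n : ℕ) : Set (List ℕ × List ℕ) :=
  {p | p.1 ∈ B q ∧ p.2 ∈ B (n - q) ∧ Succeq p.1 p.2.tail}

def FwsUni {V : Type} [Fintype V] (G : SimpleGraph V) (s : List ℕ) : Prop :=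
  ∃ R : OTree, Canonical R ∧ R.ws = s ∧
    ∃ f : graphOf R ≃g G, Centroidal G (f (rootIdx R))

def FwsBi {V : Type} [Fintype V] (G : SimpleGraph V) (s : List ℕ) : Prop :=
  ∃ u v, u ≠ v ∧ G.Adj u v ∧ Centroidal G u ∧ Centroidal G v ∧
  ∃ A B : OTree, Canonical A ∧ Canonical B ∧ B.ws ≤ A.ws ∧ s = A.ws ++ B.ws ∧
  ∃ (fA : graphOf A ≃g (G.deleteEdges {s(u,v)}).induce
        {x | (G.deleteEdges {s(u,v)}).Reachable u x})
    (fB : graphOf B ≃g (G.deleteEdges {s(u,v)}).induce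
        {x | (G.deleteEdges {s(u,v)}).Reachable v x}),
    (fA (rootIdx A)).1 = u ∧ (fB (rootIdx B)).1 = v

lemma ws_node_eq (cs : List OTree) :
    (OTree.node cs).ws = (OTree.node cs).size :: (cs.map OTree.ws).flatten := by
  rw [OTree.ws]
  congr 1
  congr 1
  exact List.attach_map_val (l := cs) (f := OTree.ws)

lemma size_node_eq (cs : List OTree) :
    (OTree.node cs).size = (cs.map OTree.size).sum + 1 := by
  rw [OTree.size]
  congr 2
  exact List.attach_map_val (l := cs) (f := OTree.size)

lemma length_ws (R : OTree) : R.ws.length = R.size := by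
  induction R using OTree.ws.induct with
  | _ cs ih =>
    rw [ws_node_eq, size_node_eq]
    simp only [List.length_cons, List.length_flatten, List.map_map, Function.comp]
    congr 2
    exact List.map_congr_left (fun c hc => ih ⟨c, hc⟩)

lemma prefix_le {l m : List ℕ} (h : l <+: m) : l ≤ m := by
  obtain ⟨t, rfl⟩ := h
  induction l with
  | nil => exact (by cases t with
      | nil => exact le_rfl
      | cons x t => exact le_of_lt List.Lex.nil)
  | cons a l ih => exact List.cons_le_cons a ih

theorem stmt14 (n q : ℕ) (a b : List ℕ) (hq1 : 1 ≤ q) (hq : q ≤ n - 1)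
    (ha : a ∈ B q) (hb : b ∈ B (n - q)) (hsucc : Succeq a b.tail)
    (R1 : OTree) (cs : List OTree)
    (h1 : Canonical R1) (h2 : Canonical (OTree.node cs))
    (hwa : R1.ws = a) (hwb : (OTree.node cs).ws = b) :
    Canonical (OTree.node (R1 :: cs)) ∧
      (OTree.node (R1 :: cs)).ws = n :: (a ++ b.tail) := by
  obtain ⟨Ra, _, hRaq, hRaw⟩ := ha
  obtain ⟨Rb, _, hRbn, hRbw⟩ := hb
  have hsa : R1.size = q := by
    rw [← length_ws, hwa, ← hRaw, length_ws, hRaq]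
  have hsb : (OTree.node cs).size = n - q := by
    rw [← length_ws, hwb, ← hRbw, length_ws, hRbn]
  have haq : a = q :: a.tail := by
    cases R1 with
    | node ds => rw [← hwa, ws_node_eq, List.tail_cons, hsa]
  have hbt : b.tail = (cs.map OTree.ws).flatten := by
    rw [← hwb, ws_node_eq, List.tail_cons]
  have hsize : (OTree.node (R1 :: cs)).size = n := by
    rw [size_node_eq] at hsb ⊢
    simp only [List.map_cons, List.sum_cons]
    omega
  have hhead : ∀ c0 ∈ cs.head?, OTree.ws c0 ≤ a := by
    intro c0 hc0
    cases cs with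
    | nil => simp at hc0
    | cons c rest =>
      simp only [List.head?_cons, Option.mem_def, Option.some.injEq] at hc0
      subst hc0
      have hpre : c.ws <+: b.tail := by
        rw [hbt]; simp only [List.map_cons, List.flatten_cons]
        exact ⟨_, rfl⟩
      rcases hsucc with h | h
      · exact le_trans (prefix_le hpre) h
      · have hc0eq : c.ws = c.size :: c.ws.tail := by
          cases c with
          | node ds => rw [ws_node_eq, List.tail_cons]
        have hla : a.length = q := by rw [← hRaw, length_ws, hRaq]
        have hsz : c.size = q := by
          obtain ⟨s, hs⟩ := h
          obtain ⟨t, ht⟩ := hpre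
          have heq : a ++ s = c.ws ++ t := hs.trans ht.symm
          rw [haq, hc0eq, List.cons_append, List.cons_append] at heq
          exact ((List.cons_eq_cons.mp heq).1).symm
        have hlc : c.ws.length = q := by rw [length_ws, hsz]
        have hp : a <+: c.ws :=
          List.prefix_of_prefix_length_le h hpre (by rw [hla, hlc])
        have : a = c.ws := hp.eq_of_length (by rw [hla, hlc])
        rw [← this]
  cases h2 with
  | node hchain hall =>
    constructor
    · exact Canonical.node (List.isChain_cons.mpr ⟨by simpa [hwa] using hhead, hchain⟩)
        (by intro c hc
            rcases List.mem_cons.mp hc with rfl | hc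
            · exact h1
            · exact hall c hc)
    · rw [ws_node_eq, hsize]
      simp only [List.map_cons, List.flatten_cons, hwa, hbt]
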